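/- Consider one inner loop of SARAH with batch size b = 1 and each f_i L-smooth. Then for every t ≥ 1, E[||∇P(w_t) − v_t||²] ≤ L²η² · Σ_{j=1}^{t} E[||v_{j−1}||²]. -/

import Mathlib

open scoped BigOperators

noncomputable section

/-- Vectors in `ℝ^d`. -/
abbrev Vec (d : ℕ) := EuclideanSpace ℝ (Fin d)

/-- Expectation (uniform average) over a finite sample space. -/
def expec {Ω : Type*} [Fintype Ω] (F : Ω → ℝ) : ℝ :=
  (Fintype.card Ω : ℝ)⁻¹ * ∑ ω, F ω

/-- The SARAH-IN state `(w_t, v_t)` with batch size `b = 1`, given the sequence of sampled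
indices `idx` (where `idx t` is the index used to form `v_t`, for `t ≥ 1`). -/
def sarah1 {d n : ℕ} (f : Fin n → Vec d → ℝ) (w0 : Vec d) (η : ℝ)
    (idx : ℕ → Fin n) : ℕ → Vec d × Vec d
  | 0 => (w0, (n : ℝ)⁻¹ • ∑ i, gradient (f i) w0)
  | t + 1 =>
    let p := sarah1 f w0 η idx t
    let w' := p.1 - η • p.2
    (w', gradient (f (idx (t + 1))) w' - gradient (f (idx (t + 1))) p.1 + p.2)

/-- Extend a finite sequence of sampled indices to all of `ℕ`. -/
def pad1 {n T : ℕ} (ω : Fin (T + 1) → Fin n) : ℕ → Fin n :=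
  fun t => if h : t < T + 1 then ω ⟨t, h⟩ else ω 0

-- conditional averaging over one coordinate
lemma sum_update {n T : ℕ} (F : (Fin T → Fin n) → ℝ) (k : Fin T) :
    (n : ℝ) * ∑ ω, F ω = ∑ ω, ∑ i, F (Function.update ω k i) := by
  classical
  have key : ∀ (a i : Fin n) (g : {j : Fin T // j ≠ k} → Fin n),
      Function.update ((Equiv.funSplitAt k (Fin n)).symm (a, g)) k i
        = (Equiv.funSplitAt k (Fin n)).symm (i, g) := by
    intro a i g
    funext j
    by_cases h : j = k
    · subst h; simp [Equiv.funSplitAt, Equiv.piSplitAt]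
    · simp [Function.update_of_ne h, Equiv.funSplitAt, Equiv.piSplitAt, h]
  rw [← Equiv.sum_comp (Equiv.funSplitAt k (Fin n)).symm (fun ω => ∑ i, F (Function.update ω k i)),
      ← Equiv.sum_comp (Equiv.funSplitAt k (Fin n)).symm F]
  rw [Fintype.sum_prod_type, Fintype.sum_prod_type]
  simp only [key]
  rw [Finset.sum_comm]
  rw [← Finset.sum_comm (γ := Fin n)]
  simp [Finset.mul_sum]

lemma pad1_update {n T : ℕ} (ω : Fin (T + 1) → Fin n) (k : Fin (T + 1)) (i : Fin n)
    (j : ℕ) (hj : j < T + 1) (hjk : j ≠ k.val) :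
    pad1 (Function.update ω k i) j = pad1 ω j := by
  unfold pad1
  rw [dif_pos hj, dif_pos hj]
  apply Function.update_of_ne
  simp [Fin.ext_iff, hjk]

lemma pad1_update_self {n T : ℕ} (ω : Fin (T + 1) → Fin n) (k : Fin (T + 1)) (i : Fin n) :
    pad1 (Function.update ω k i) k.val = i := by
  unfold pad1
  rw [dif_pos k.isLt]
  simp

lemma sarah1_congr {d n : ℕ} (f : Fin n → Vec d → ℝ) (w0 : Vec d) (η : ℝ)
    (idx idx' : ℕ → Fin n) (s : ℕ) (h : ∀ j, 1 ≤ j → j ≤ s → idx j = idx' j) :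
    sarah1 f w0 η idx s = sarah1 f w0 η idx' s := by
  induction s with
  | zero => rfl
  | succ s ih =>
    have hih := ih (fun j h1 h2 => h j h1 (h2.trans (Nat.le_succ s)))
    simp only [sarah1, hih, h (s+1) (Nat.succ_le_succ (Nat.zero_le s)) le_rfl]

lemma sarah1_update {d n T : ℕ} (f : Fin n → Vec d → ℝ) (w0 : Vec d) (η : ℝ)
    (ω : Fin (T + 1) → Fin n) (k : Fin (T + 1)) (i : Fin n) (s : ℕ) (hs : s < k.val) :
    sarah1 f w0 η (pad1 (Function.update ω k i)) s = sarah1 f w0 η (pad1 ω) s := by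
  refine sarah1_congr _ _ _ _ _ _ (fun j h1 h2 => ?_)
  have hj : j < T + 1 := lt_of_le_of_lt (h2.trans hs.le) k.isLt
  exact pad1_update ω k i j hj (Nat.ne_of_lt (lt_of_le_of_lt h2 hs))

lemma gradP {d n : ℕ} (f : Fin n → Vec d → ℝ) (hdiff : ∀ i, Differentiable ℝ (f i))
    (w : Vec d) :
    gradient (fun w => (n : ℝ)⁻¹ * ∑ i, f i w) w = (n : ℝ)⁻¹ • ∑ i, gradient (f i) w := by
  have h1 : HasFDerivAt (fun w => (n : ℝ)⁻¹ * ∑ i, f i w)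
      ((n : ℝ)⁻¹ • ∑ i, fderiv ℝ (f i) w) w :=
    (HasFDerivAt.fun_sum (fun i _ => ((hdiff i) w).hasFDerivAt)).const_mul ((n:ℝ)⁻¹)
  have h : HasGradientAt (fun w => (n : ℝ)⁻¹ * ∑ i, f i w)
      ((n : ℝ)⁻¹ • ∑ i, gradient (f i) w) w := by
    rw [hasGradientAt_iff_hasFDerivAt, map_smul, map_sum]
    simp only [gradient, LinearIsometryEquiv.apply_symm_apply]
    exact h1
  exact h.gradient

lemma avg_norm_sq {V : Type*} [NormedAddCommGroup V] [InnerProductSpace ℝ V] {n : ℕ}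
    (hn : 0 < n) (A : V) (X : Fin n → V) :
    ∑ i, ‖A + ((n:ℝ)⁻¹ • ∑ j, X j - X i)‖ ^ 2 ≤ (n:ℝ) * ‖A‖ ^ 2 + ∑ i, ‖X i‖ ^ 2 := by
  have hn' : (n:ℝ) ≠ 0 := by positivity
  set B : V := (n:ℝ)⁻¹ • ∑ j, X j with hB
  have hXB : ∑ i, X i = (n:ℝ) • B := by
    rw [hB, smul_smul, mul_inv_cancel₀ hn', one_smul]
  have hsum : ∑ i, (B - X i) = 0 := by
    rw [Finset.sum_sub_distrib, Finset.sum_const, Finset.card_univ, Fintype.card_fin, hXB,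
      ← Nat.cast_smul_eq_nsmul ℝ, sub_self]
  have key : ∑ i, ‖A + (B - X i)‖ ^ 2 = (n:ℝ) * ‖A‖ ^ 2 + ∑ i, ‖B - X i‖ ^ 2 := by
    rw [Finset.sum_congr rfl (fun i _ => norm_add_sq_real A (B - X i)),
      Finset.sum_add_distrib, Finset.sum_add_distrib, Finset.sum_const, Finset.card_univ,
      Fintype.card_fin, ← Finset.mul_sum, ← inner_sum, hsum, inner_zero_right]
    push_cast
    ring
  have key2 : ∑ i, ‖B - X i‖ ^ 2 = ∑ i, ‖X i‖ ^ 2 - (n:ℝ) * ‖B‖ ^ 2 := by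
    rw [Finset.sum_congr rfl (fun i _ => norm_sub_sq_real B (X i)),
      Finset.sum_add_distrib, Finset.sum_sub_distrib, Finset.sum_const, Finset.card_univ,
      Fintype.card_fin, ← Finset.mul_sum, ← inner_sum, hXB, real_inner_smul_right,
      real_inner_self_eq_norm_sq]
    push_cast
    ring
  have hB2 : 0 ≤ (n:ℝ) * ‖B‖ ^ 2 := by positivity
  rw [key, key2]
  linarith

/-- For SARAH with batch size `b = 1`, uniformly sampled indices and `L`-smooth
components, for every `t ≥ 1`:
`E‖∇P(w_t) − v_t‖² ≤ L²η² ∑_{j=1}^t E‖v_{j−1}‖²`. -/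
theorem sarah_b1_variance_bound
    {d n : ℕ} (hn : 1 ≤ n)
    (f : Fin n → Vec d → ℝ) (L : ℝ) (hL : 0 < L)
    (hdiff : ∀ i, Differentiable ℝ (f i))
    (hsmooth : ∀ i (w w' : Vec d),
      ‖gradient (f i) w - gradient (f i) w'‖ ≤ L * ‖w - w'‖)
    (P : Vec d → ℝ) (hP : P = fun w => (n : ℝ)⁻¹ * ∑ i, f i w)
    (w0 : Vec d) (η : ℝ) (hη : 0 < η) (t : ℕ) (ht : 1 ≤ t) :
    expec (fun ω : Fin (t + 1) → Fin n =>
        ‖gradient P ((sarah1 f w0 η (pad1 ω) t).1)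
          - (sarah1 f w0 η (pad1 ω) t).2‖ ^ 2)
      ≤ L ^ 2 * η ^ 2 * ∑ j ∈ Finset.Icc 1 t,
          expec (fun ω : Fin (t + 1) → Fin n =>
            ‖(sarah1 f w0 η (pad1 ω) (j - 1)).2‖ ^ 2) := by
  subst hP
  have hnR : (0:ℝ) < n := by exact_mod_cast hn
  have main : ∀ s, s ≤ t →
      expec (fun ω : Fin (t + 1) → Fin n =>
          ‖gradient (fun w => (n : ℝ)⁻¹ * ∑ i, f i w) ((sarah1 f w0 η (pad1 ω) s).1)
            - (sarah1 f w0 η (pad1 ω) s).2‖ ^ 2)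
        ≤ L ^ 2 * η ^ 2 * ∑ j ∈ Finset.Icc 1 s,
            expec (fun ω : Fin (t + 1) → Fin n =>
              ‖(sarah1 f w0 η (pad1 ω) (j - 1)).2‖ ^ 2) := by
    intro s
    induction s with
    | zero =>
      intro _
      have hz : (fun ω : Fin (t + 1) → Fin n =>
          ‖gradient (fun w => (n : ℝ)⁻¹ * ∑ i, f i w) ((sarah1 f w0 η (pad1 ω) 0).1)
            - (sarah1 f w0 η (pad1 ω) 0).2‖ ^ 2) = fun _ => (0:ℝ) := by
        funext ω
        rw [show sarah1 f w0 η (pad1 ω) 0 = (w0, (n:ℝ)⁻¹ • ∑ i, gradient (f i) w0) from rfl]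
        simp [gradP f hdiff w0]
      rw [hz]
      simp [expec]
    | succ s ih =>
      intro hst
      have hs_le : s ≤ t := Nat.le_of_succ_le hst
      have ihs := ih hs_le
      set k : Fin (t + 1) := ⟨s + 1, Nat.lt_succ_of_le hst⟩ with hk
      -- pointwise conditional bound
      have point : ∀ ω : Fin (t + 1) → Fin n,
          ∑ i, ‖gradient (fun w => (n : ℝ)⁻¹ * ∑ i, f i w)
                ((sarah1 f w0 η (pad1 (Function.update ω k i)) (s+1)).1)
              - (sarah1 f w0 η (pad1 (Function.update ω k i)) (s+1)).2‖ ^ 2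
          ≤ (n:ℝ) * (‖gradient (fun w => (n : ℝ)⁻¹ * ∑ i, f i w)
                ((sarah1 f w0 η (pad1 ω) s).1) - (sarah1 f w0 η (pad1 ω) s).2‖ ^ 2
              + L^2 * η^2 * ‖(sarah1 f w0 η (pad1 ω) s).2‖ ^ 2) := by
        intro ω
        set p := sarah1 f w0 η (pad1 ω) s with hp
        set w' : Vec d := p.1 - η • p.2 with hw'
        have hS : ∀ i : Fin n, sarah1 f w0 η (pad1 (Function.update ω k i)) (s+1)
            = (w', gradient (f i) w' - gradient (f i) p.1 + p.2) := by
          intro i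
          have h1 : sarah1 f w0 η (pad1 (Function.update ω k i)) s = p :=
            sarah1_update f w0 η ω k i s (by simp [hk])
          have h2 : pad1 (Function.update ω k i) (s+1) = i := pad1_update_self ω k i
          simp only [sarah1, h1, h2, hw']
        set X : Fin n → Vec d := fun i => gradient (f i) w' - gradient (f i) p.1 with hX
        set A : Vec d := gradient (fun w => (n : ℝ)⁻¹ * ∑ i, f i w) p.1 - p.2 with hA
        have hXbar : (n:ℝ)⁻¹ • ∑ j, X j
            = gradient (fun w => (n : ℝ)⁻¹ * ∑ i, f i w) w'
              - gradient (fun w => (n : ℝ)⁻¹ * ∑ i, f i w) p.1 := by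
          rw [gradP f hdiff, gradP f hdiff]
          simp only [hX, Finset.sum_sub_distrib, smul_sub]
        have hrw : ∀ i : Fin n,
            gradient (fun w => (n : ℝ)⁻¹ * ∑ i, f i w) w' - (X i + p.2)
              = A + ((n:ℝ)⁻¹ • ∑ j, X j - X i) := by
          intro i
          rw [hXbar, hA]
          abel
        have hXi : ∀ i : Fin n, ‖X i‖ ^ 2 ≤ L^2 * η^2 * ‖p.2‖ ^ 2 := by
          intro i
          have h1 : ‖X i‖ ≤ L * ‖w' - p.1‖ := hsmooth i w' p.1
          have h2 : ‖w' - p.1‖ = η * ‖p.2‖ := by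
            rw [hw', sub_sub_cancel_left, norm_neg, norm_smul, Real.norm_eq_abs,
              abs_of_pos hη]
          have h3 : ‖X i‖ ≤ L * (η * ‖p.2‖) := by rw [← h2]; exact h1
          have h4 := pow_le_pow_left₀ (norm_nonneg (X i)) h3 2
          calc ‖X i‖ ^ 2 ≤ (L * (η * ‖p.2‖)) ^ 2 := h4
            _ = L^2 * η^2 * ‖p.2‖ ^ 2 := by ring
        calc ∑ i, ‖gradient (fun w => (n : ℝ)⁻¹ * ∑ i, f i w)
                ((sarah1 f w0 η (pad1 (Function.update ω k i)) (s+1)).1)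
              - (sarah1 f w0 η (pad1 (Function.update ω k i)) (s+1)).2‖ ^ 2
            = ∑ i, ‖A + ((n:ℝ)⁻¹ • ∑ j, X j - X i)‖ ^ 2 := by
              refine Finset.sum_congr rfl (fun i _ => ?_)
              rw [hS i]
              rw [show (w', gradient (f i) w' - gradient (f i) p.1 + p.2).1 = w' from rfl,
                show (w', gradient (f i) w' - gradient (f i) p.1 + p.2).2
                  = X i + p.2 from rfl, hrw i]
          _ ≤ (n:ℝ) * ‖A‖ ^ 2 + ∑ i, ‖X i‖ ^ 2 := avg_norm_sq hn A X
          _ ≤ (n:ℝ) * ‖A‖ ^ 2 + ∑ _i : Fin n, L^2 * η^2 * ‖p.2‖ ^ 2 :=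
              add_le_add_right (Finset.sum_le_sum (fun i _ => hXi i)) _
          _ = (n:ℝ) * (‖A‖ ^ 2 + L^2 * η^2 * ‖p.2‖ ^ 2) := by
              rw [Finset.sum_const, Finset.card_univ, Fintype.card_fin, nsmul_eq_mul]
              ring
      -- average the pointwise bound
      have hstep : expec (fun ω : Fin (t + 1) → Fin n =>
            ‖gradient (fun w => (n : ℝ)⁻¹ * ∑ i, f i w) ((sarah1 f w0 η (pad1 ω) (s+1)).1)
              - (sarah1 f w0 η (pad1 ω) (s+1)).2‖ ^ 2)
          ≤ expec (fun ω : Fin (t + 1) → Fin n =>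
              ‖gradient (fun w => (n : ℝ)⁻¹ * ∑ i, f i w) ((sarah1 f w0 η (pad1 ω) s).1)
                - (sarah1 f w0 η (pad1 ω) s).2‖ ^ 2)
            + L^2 * η^2 * expec (fun ω : Fin (t + 1) → Fin n =>
                ‖(sarah1 f w0 η (pad1 ω) s).2‖ ^ 2) := by
        set F : (Fin (t + 1) → Fin n) → ℝ := fun ω =>
          ‖gradient (fun w => (n : ℝ)⁻¹ * ∑ i, f i w) ((sarah1 f w0 η (pad1 ω) (s+1)).1)
            - (sarah1 f w0 η (pad1 ω) (s+1)).2‖ ^ 2 with hF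
        set G : (Fin (t + 1) → Fin n) → ℝ := fun ω =>
          ‖gradient (fun w => (n : ℝ)⁻¹ * ∑ i, f i w) ((sarah1 f w0 η (pad1 ω) s).1)
            - (sarah1 f w0 η (pad1 ω) s).2‖ ^ 2
          + L^2 * η^2 * ‖(sarah1 f w0 η (pad1 ω) s).2‖ ^ 2 with hG
        have key : ∑ ω, F ω ≤ ∑ ω, G ω := by
          have h1 := sum_update F k
          have h2 : ∑ ω, ∑ i, F (Function.update ω k i) ≤ ∑ ω, (n:ℝ) * G ω :=
            Finset.sum_le_sum (fun ω _ => point ω)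
          have h3 : (n:ℝ) * ∑ ω, F ω ≤ (n:ℝ) * ∑ ω, G ω := by
            rw [h1, Finset.mul_sum]; exact h2
          exact le_of_mul_le_mul_left h3 hnR
        have hcard : (0:ℝ) ≤ ((Fintype.card (Fin (t + 1) → Fin n) : ℝ))⁻¹ := by positivity
        have : expec F ≤ expec G := by
          unfold expec
          exact mul_le_mul_of_nonneg_left key hcard
        calc expec F ≤ expec G := this
          _ = _ := by
            unfold expec
            simp only [hG]
            rw [Finset.sum_add_distrib, mul_add, ← Finset.mul_sum]
            ring
      have hsum : ∑ j ∈ Finset.Icc 1 (s+1),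
            expec (fun ω : Fin (t + 1) → Fin n =>
              ‖(sarah1 f w0 η (pad1 ω) (j - 1)).2‖ ^ 2)
          = (∑ j ∈ Finset.Icc 1 s,
              expec (fun ω : Fin (t + 1) → Fin n =>
                ‖(sarah1 f w0 η (pad1 ω) (j - 1)).2‖ ^ 2))
            + expec (fun ω : Fin (t + 1) → Fin n =>
                ‖(sarah1 f w0 η (pad1 ω) s).2‖ ^ 2) := by
        rw [Finset.sum_Icc_succ_top (Nat.succ_le_succ (Nat.zero_le s))]
        simp
      rw [hsum, mul_add]
      exact le_trans hstep (add_le_add_left ihs _)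
  exact main t le_rfl
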